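/- Let V be a real separable Hilbert space, (T(t))_{t≥0} a semigroup of bounded linear operators on V (T(0) = Id and T(t+s) = T(t)T(s)) which is stable, i.e. T(t)v → 0 in V as t → ∞ for every v ∈ V, and let (ν_t)_{t≥0} be a skew-convolution semigroup with respect to (T(t))_{t≥0}, i.e. ν_{t+s} = T_tν_s ∗ ν_t for all s,t ≥ 0. Then there exists a stationary measure ν (i.e. a Borel probability measure ν with ν = T_tν ∗ ν_t for all t ≥ 0) if and only if ν_t converges weakly as t → ∞; in this case the weak limit of (ν_t)_{t≥0} equals the stationary measure ν. -/

import Mathlib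

open MeasureTheory Filter Topology
open scoped MeasureTheory NNReal BoundedContinuousFunction

set_option linter.unusedSectionVars false
set_option linter.unusedVariables false
set_option maxHeartbeats 1000000

section helpers
variable {V : Type*}
    [NormedAddCommGroup V] [InnerProductSpace ℝ V] [CompleteSpace V] [SecondCountableTopology V]
    [MeasurableSpace V] [BorelSpace V]


    [NormedAddCommGroup V] [InnerProductSpace ℝ V] [CompleteSpace V] [SecondCountableTopology V]
    [MeasurableSpace V] [BorelSpace V]

lemma my_integrable_of_bdd {X : Type*} [MeasurableSpace X] [TopologicalSpace X]
    [OpensMeasurableSpace X] (μ : Measure X) [IsFiniteMeasure μ] {f : X → ℝ}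
    (hf : Continuous f) {C : ℝ} (h : ∀ x, |f x| ≤ C) : Integrable f μ :=
  (BoundedContinuousFunction.ofNormedAddCommGroup f hf C
    (by simpa [Real.norm_eq_abs] using h)).integrable μ

lemma my_integral_conv (μ κ : Measure V) [IsProbabilityMeasure μ] [IsProbabilityMeasure κ]
    (L : V →L[ℝ] V) {f : V → ℝ} (hf : Continuous f) {C : ℝ} (hC : ∀ x, |f x| ≤ C) :
    ∫ v, f v ∂((μ.map L) ∗ κ) = ∫ x, ∫ y, f (L x + y) ∂κ ∂μ := by
  have hL : Measurable L := L.continuous.measurable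
  have h1 : (μ.map L) ∗ κ = ((μ.prod κ).map (Prod.map L id)).map (fun p : V × V => p.1 + p.2) := by
    rw [Measure.conv]
    congr 1
    rw [← Measure.map_prod_map _ _ hL measurable_id, Measure.map_id]
  rw [h1, integral_map (by fun_prop) hf.aestronglyMeasurable,
    integral_map (by fun_prop) (by exact (hf.comp continuous_add).aestronglyMeasurable)]
  have : Integrable (fun p : V × V => f (L p.1 + p.2)) (μ.prod κ) :=
    my_integrable_of_bdd _ (by fun_prop) (fun p => hC _)
  rw [← integral_prod _ this]
  rfl

lemma my_cont_inner (κ : Measure V) [IsProbabilityMeasure κ] (L : V →L[ℝ] V) {f : V → ℝ}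
    (hf : Continuous f) {C : ℝ} (hC : ∀ x, |f x| ≤ C) :
    Continuous (fun x => ∫ y, f (L x + y) ∂κ) := by
  apply continuous_of_dominated (bound := fun _ => C)
  · exact fun x => (hf.comp (continuous_const.add continuous_id)).aestronglyMeasurable
  · exact fun x => Eventually.of_forall fun y => by simpa [Real.norm_eq_abs] using hC (L x + y)
  · exact integrable_const C
  · exact Eventually.of_forall fun y => hf.comp ((L.continuous).add continuous_const)

lemma my_bound_inner (κ : Measure V) [IsProbabilityMeasure κ] (L : V →L[ℝ] V) {f : V → ℝ}
    (hf : Continuous f) {C : ℝ} (hC : ∀ x, |f x| ≤ C) (x : V) :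
    |∫ y, f (L x + y) ∂κ| ≤ C := by
  rw [← Real.norm_eq_abs]
  calc ‖∫ y, f (L x + y) ∂κ‖ ≤ C * (κ Set.univ).toReal :=
        norm_integral_le_of_norm_le_const
          (Eventually.of_forall fun y => by simpa [Real.norm_eq_abs] using hC (L x + y))
    _ = C := by simp


lemma my_lipschitz_tendsto
    (T : ℝ → V →L[ℝ] V)
    (hstable : ∀ v : V, Tendsto (fun t : ℝ => T t v) atTop (𝓝 0))
    (ν : ℝ → Measure V) (hprob : ∀ t : ℝ, IsProbabilityMeasure (ν t))
    (ν0 : Measure V) [IsProbabilityMeasure ν0]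
    (hstat : ∀ t : ℝ, 0 ≤ t → ν0 = (ν0.map (T t)) ∗ (ν t))
    {g : V → ℝ} {K : ℝ≥0} (hg : LipschitzWith K g) {C : ℝ} (hC : ∀ x, |g x| ≤ C) :
    Tendsto (fun t : ℝ => ∫ v, g v ∂(ν t)) atTop (𝓝 (∫ v, g v ∂ν0)) := by
  have := fun t => hprob t
  have hgc : Continuous g := hg.continuous
  have hC0 : 0 ≤ C := le_trans (abs_nonneg _) (hC 0)
  set B : ℝ → ℝ := fun t => ∫ x, min ((K : ℝ) * ‖T t x‖) (2 * C) ∂ν0 with hBdef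
  have hB : Tendsto B atTop (𝓝 0) := by
    have h0 : (0 : ℝ) = ∫ (x : V), (0 : ℝ) ∂ν0 := by simp
    rw [h0]
    apply tendsto_integral_filter_of_dominated_convergence (bound := fun _ => 2 * C)
    · exact Eventually.of_forall fun t =>
        ((continuous_const.mul (T t).continuous.norm).min continuous_const).aestronglyMeasurable
    · refine Eventually.of_forall fun t => Eventually.of_forall fun x => ?_
      have h1 : (0:ℝ) ≤ min ((K : ℝ) * ‖T t x‖) (2 * C) :=
        le_min (by positivity) (by linarith)
      rw [Real.norm_eq_abs, abs_of_nonneg h1]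
      exact min_le_right _ _
    · exact integrable_const _
    · refine Eventually.of_forall fun x => ?_
      have h1 : Tendsto (fun t : ℝ => (K : ℝ) * ‖T t x‖) atTop (𝓝 0) := by
        simpa using (tendsto_const_nhds (x := (K:ℝ))).mul (hstable x).norm
      have h2 := h1.min (tendsto_const_nhds (x := 2 * C))
      rwa [min_eq_left (by linarith)] at h2
  have key : ∀ t : ℝ, 0 ≤ t → |(∫ v, g v ∂(ν t)) - ∫ v, g v ∂ν0| ≤ B t := by
    intro t ht
    have hginteg : ∀ (μ : Measure V) [IsProbabilityMeasure μ], Integrable g μ :=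
      fun μ _ => my_integrable_of_bdd μ hgc hC
    have h0 : ∫ v, g v ∂ν0 = ∫ x, ∫ y, g (T t x + y) ∂(ν t) ∂ν0 := by
      conv_lhs => rw [hstat t ht]
      exact my_integral_conv ν0 (ν t) (T t) hgc hC
    have hinner : Integrable (fun x => ∫ y, g (T t x + y) ∂(ν t)) ν0 :=
      my_integrable_of_bdd ν0 (my_cont_inner (ν t) (T t) hgc hC)
        (my_bound_inner (ν t) (T t) hgc hC)
    have h2 : ∫ v, g v ∂(ν t) = ∫ (x : V), (∫ y, g y ∂(ν t)) ∂ν0 := by simp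
    rw [h0, h2, ← integral_sub (integrable_const _) hinner, ← Real.norm_eq_abs]
    apply norm_integral_le_of_norm_le
      (my_integrable_of_bdd ν0
        ((continuous_const.mul (T t).continuous.norm).min continuous_const)
        (C := 2 * C) (fun x => by
          have h1 : (0:ℝ) ≤ min ((K : ℝ) * ‖T t x‖) (2 * C) :=
            le_min (by positivity) (by linarith)
          show |min ((K : ℝ) * ‖T t x‖) (2 * C)| ≤ 2 * C
          rw [abs_of_nonneg h1]; exact min_le_right _ _))
    refine Eventually.of_forall fun x => ?_
    have hint2 : Integrable (fun y => g (T t x + y)) (ν t) :=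
      my_integrable_of_bdd (ν t) (by continuity) (fun y => hC _)
    have hsub : (∫ y, g y ∂(ν t)) - ∫ y, g (T t x + y) ∂(ν t)
        = ∫ y, (g y - g (T t x + y)) ∂(ν t) :=
      (integral_sub (hginteg (ν t)) hint2).symm
    rw [hsub]
    calc ‖∫ y, (g y - g (T t x + y)) ∂(ν t)‖
        ≤ min ((K : ℝ) * ‖T t x‖) (2 * C) * ((ν t) Set.univ).toReal := by
          apply norm_integral_le_of_norm_le_const
          refine Eventually.of_forall fun y => ?_
          rw [Real.norm_eq_abs]
          refine le_min ?_ ?_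
          · have := hg.dist_le_mul y (T t x + y)
            rw [Real.dist_eq] at this
            refine this.trans ?_
            have : dist y (T t x + y) = ‖T t x‖ := by
              rw [dist_eq_norm]; simp
            rw [this]
          · calc |g y - g (T t x + y)| ≤ |g y| + |g (T t x + y)| := abs_sub _ _
              _ ≤ C + C := add_le_add (hC _) (hC _)
              _ = 2 * C := by ring
      _ = min ((K : ℝ) * ‖T t x‖) (2 * C) := by simp
  have hsq : Tendsto (fun t : ℝ => (∫ v, g v ∂(ν t)) - ∫ v, g v ∂ν0) atTop (𝓝 0) := by
    apply squeeze_zero_norm' ?_ hB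
    filter_upwards [eventually_ge_atTop (0:ℝ)] with t ht
    simpa [Real.norm_eq_abs] using key t ht
  simpa using hsq.add_const (∫ v, g v ∂ν0)

lemma my_forall_bcf_tendsto
    (T : ℝ → V →L[ℝ] V)
    (hstable : ∀ v : V, Tendsto (fun t : ℝ => T t v) atTop (𝓝 0))
    (ν : ℝ → Measure V) (hprob : ∀ t : ℝ, IsProbabilityMeasure (ν t))
    (ν0 : Measure V) [IsProbabilityMeasure ν0]
    (hstat : ∀ t : ℝ, 0 ≤ t → ν0 = (ν0.map (T t)) ∗ (ν t))
    (f : V →ᵇ ℝ) :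
    Tendsto (fun t : ℝ => ∫ v, f v ∂(ν t)) atTop (𝓝 (∫ v, f v ∂ν0)) := by
  have := fun t => hprob t
  rw [tendsto_iff_seq_tendsto]
  intro x hx
  have h_opens : ∀ G : Set V, IsOpen G → ν0 G ≤ atTop.liminf (fun n => ν (x n) G) := by
    intro G hG
    rcases Set.eq_empty_or_nonempty Gᶜ with hGc | hGc
    · have hGuniv : G = Set.univ := by
        rw [← Set.compl_empty_iff, hGc]
      simp [hGuniv, measure_univ, liminf_const]
    -- approximating Lipschitz functions
    set g : ℕ → V → ℝ := fun k v => min ((k : ℝ) * Metric.infDist v Gᶜ) 1 with hgdef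
    have hglip : ∀ k : ℕ, LipschitzWith k (g k) := by
      intro k
      apply LipschitzWith.min_const
      apply LipschitzWith.of_dist_le_mul
      intro a b
      have h1 := (Metric.lipschitz_infDist_pt Gᶜ).dist_le_mul a b
      calc dist ((k : ℝ) * Metric.infDist a Gᶜ) ((k : ℝ) * Metric.infDist b Gᶜ)
          = (k : ℝ) * dist (Metric.infDist a Gᶜ) (Metric.infDist b Gᶜ) := by
            rw [Real.dist_eq, Real.dist_eq, ← mul_sub, abs_mul, abs_of_nonneg (by positivity)]
        _ ≤ (k : ℝ) * dist a b := by
            apply mul_le_mul_of_nonneg_left _ (by positivity)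
            simpa using h1
    have hg0 : ∀ k v, 0 ≤ g k v := fun k v =>
      le_min (mul_nonneg (Nat.cast_nonneg k) Metric.infDist_nonneg) zero_le_one
    have hg1 : ∀ k v, g k v ≤ 1 := fun k v => min_le_right _ _
    have hgabs : ∀ k v, |g k v| ≤ 1 := fun k v => abs_le.2 ⟨by linarith [hg0 k v], hg1 k v⟩
    have hgle_ind : ∀ k v, ENNReal.ofReal (g k v) ≤ G.indicator (fun _ => 1) v := by
      intro k v
      by_cases hv : v ∈ G
      · rw [Set.indicator_of_mem hv]
        exact ENNReal.ofReal_le_one.mpr (hg1 k v)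
      · have : Metric.infDist v Gᶜ = 0 := Metric.infDist_zero_of_mem hv
        simp [hgdef, this]
    -- Step 1: lintegrals of g k tend to ν0 G
    have step1 : Tendsto (fun k : ℕ => ∫⁻ v, ENNReal.ofReal (g k v) ∂ν0) atTop
        (𝓝 (ν0 G)) := by
      rw [← lintegral_indicator_one hG.measurableSet]
      apply lintegral_tendsto_of_tendsto_of_monotone
      · exact fun k => (ENNReal.continuous_ofReal.comp (hglip k).continuous).aemeasurable
      · refine Eventually.of_forall fun v => ?_
        intro i j hij
        apply ENNReal.ofReal_le_ofReal
        apply min_le_min _ le_rfl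
        exact mul_le_mul_of_nonneg_right (by exact_mod_cast hij) Metric.infDist_nonneg
      · refine Eventually.of_forall fun v => ?_
        by_cases hv : v ∈ G
        · have hd : 0 < Metric.infDist v Gᶜ := by
            rw [← hG.isClosed_compl.notMem_iff_infDist_pos hGc]
            simpa using hv
          rw [Set.indicator_of_mem hv]
          have hev : ∀ᶠ k : ℕ in atTop, ENNReal.ofReal (g k v) = 1 := by
            filter_upwards [eventually_ge_atTop (⌈(Metric.infDist v Gᶜ)⁻¹⌉₊)] with k hk
            have : (1 : ℝ) ≤ (k : ℝ) * Metric.infDist v Gᶜ := by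
              rw [← inv_mul_cancel₀ (ne_of_gt hd)]
              apply mul_le_mul_of_nonneg_right _ hd.le
              calc (Metric.infDist v Gᶜ)⁻¹ ≤ (⌈(Metric.infDist v Gᶜ)⁻¹⌉₊ : ℝ) :=
                    Nat.le_ceil _
                _ ≤ (k : ℝ) := by exact_mod_cast hk
            simp [hgdef, min_eq_right this]
          exact Tendsto.congr' (hev.mono fun k hk => hk.symm) tendsto_const_nhds
        · have : Metric.infDist v Gᶜ = 0 := Metric.infDist_zero_of_mem hv
          rw [Set.indicator_of_notMem hv]
          simp [hgdef, this]
    -- Step 2: each lintegral is ≤ liminf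
    have step2 : ∀ k : ℕ, (∫⁻ v, ENNReal.ofReal (g k v) ∂ν0)
        ≤ atTop.liminf (fun n => ν (x n) G) := by
      intro k
      have hgint : ∀ (μ : Measure V) [IsProbabilityMeasure μ], Integrable (g k) μ :=
        fun μ _ => my_integrable_of_bdd μ (hglip k).continuous (hgabs k)
      have hconv : Tendsto (fun t : ℝ => ∫ v, g k v ∂(ν t)) atTop (𝓝 (∫ v, g k v ∂ν0)) :=
        my_lipschitz_tendsto T hstable ν hprob ν0 hstat (hglip k) (hgabs k)
      have hconvn : Tendsto (fun n => ENNReal.ofReal (∫ v, g k v ∂(ν (x n)))) atTop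
          (𝓝 (ENNReal.ofReal (∫ v, g k v ∂ν0))) :=
        (ENNReal.continuous_ofReal.continuousAt.tendsto.comp (hconv.comp hx))
      have hlint : ∀ (μ : Measure V) [IsProbabilityMeasure μ],
          ENNReal.ofReal (∫ v, g k v ∂μ) = ∫⁻ v, ENNReal.ofReal (g k v) ∂μ :=
        fun μ _ => ofReal_integral_eq_lintegral_ofReal (hgint μ)
          (Eventually.of_forall (hg0 k))
      rw [← hlint ν0, ← hconvn.liminf_eq]
      have hev : ∀ᶠ n in atTop,
          ENNReal.ofReal (∫ v, g k v ∂(ν (x n))) ≤ ν (x n) G := by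
        refine Eventually.of_forall fun n => ?_
        rw [hlint (ν (x n))]
        calc ∫⁻ v, ENNReal.ofReal (g k v) ∂(ν (x n))
            ≤ ∫⁻ v, G.indicator (fun _ => 1) v ∂(ν (x n)) := lintegral_mono (hgle_ind k)
          _ = ν (x n) G := lintegral_indicator_one hG.measurableSet
      exact liminf_le_liminf hev
    exact le_of_tendsto' step1 step2
  have hle : ∀ f' : V →ᵇ ℝ, 0 ≤ f' →
      ∫ v, f' v ∂ν0 ≤ atTop.liminf (fun n => ∫ v, f' v ∂(ν (x n))) :=
    fun f' hf' =>
      integral_le_liminf_integral_of_forall_isOpen_measure_le_liminf_measure hf' h_opens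
  exact BoundedContinuousFunction.tendsto_integral_of_forall_integral_le_liminf_integral (μs := fun n => ν (x n)) hle f

lemma my_ext (μ κ : Measure V) [IsProbabilityMeasure μ] [IsProbabilityMeasure κ]
    (h : ∀ f : V →ᵇ ℝ, ∫ v, f v ∂μ = ∫ v, f v ∂κ) : μ = κ := by
  apply ext_of_forall_lintegral_eq_of_IsFiniteMeasure
  intro f
  have lip : LipschitzWith 1 ((↑) : ℝ≥0 → ℝ) := isometry_subtype_coe.lipschitz
  set fR : V →ᵇ ℝ := BoundedContinuousFunction.comp _ lip f with hfR
  have key : ∀ (ρ : Measure V) [IsProbabilityMeasure ρ],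
      ∫⁻ x, ENNReal.ofNNReal (f x) ∂ρ = ENNReal.ofReal (∫ x, fR x ∂ρ) := by
    intro ρ _
    rw [ofReal_integral_eq_lintegral_ofReal (fR.integrable ρ)
      (Eventually.of_forall fun x => (f x).coe_nonneg)]
    refine lintegral_congr fun x => ?_
    show ENNReal.ofNNReal (f x) = ENNReal.ofReal ((f x : ℝ))
    rw [ENNReal.ofReal_coe_nnreal]
  rw [key μ, key κ, h fR]

lemma my_bcf_bound (f : V →ᵇ ℝ) (x : V) : |f x| ≤ ‖f‖ := by
  simpa [Real.norm_eq_abs] using f.norm_coe_le_norm x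

lemma my_limit_stationary
    (T : ℝ → V →L[ℝ] V)
    (ν : ℝ → Measure V) (hprob : ∀ t : ℝ, IsProbabilityMeasure (ν t))
    (hskew : ∀ s t : ℝ, 0 ≤ s → 0 ≤ t → ν (t + s) = ((ν s).map (T t)) ∗ (ν t))
    (νlim : Measure V) [IsProbabilityMeasure νlim]
    (hconv : ∀ f : V → ℝ, Continuous f → (∃ C : ℝ, ∀ x : V, |f x| ≤ C) →
      Tendsto (fun t : ℝ => ∫ v, f v ∂(ν t)) atTop (𝓝 (∫ v, f v ∂νlim)))
    (t : ℝ) (ht : 0 ≤ t) : νlim = (νlim.map (T t)) ∗ (ν t) := by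
  have := fun s => hprob s
  haveI : IsProbabilityMeasure (νlim.map (T t)) :=
    Measure.isProbabilityMeasure_map (T t).continuous.measurable.aemeasurable
  apply my_ext
  intro f
  have hfb : ∀ x, |f x| ≤ ‖f‖ := my_bcf_bound f
  set g : V → ℝ := fun x => ∫ y, f (T t x + y) ∂(ν t) with hgdef
  have hgc : Continuous g := my_cont_inner (ν t) (T t) f.continuous hfb
  have hgb : ∀ x, |g x| ≤ ‖f‖ := my_bound_inner (ν t) (T t) f.continuous hfb
  have h1 : Tendsto (fun s : ℝ => ∫ v, f v ∂(ν (t + s))) atTop (𝓝 (∫ v, f v ∂νlim)) :=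
    (hconv f f.continuous ⟨‖f‖, hfb⟩).comp (tendsto_atTop_add_const_left atTop t tendsto_id)
  have h2 : ∀ᶠ s : ℝ in atTop, (∫ v, f v ∂(ν (t + s))) = ∫ x, g x ∂(ν s) := by
    filter_upwards [eventually_ge_atTop (0:ℝ)] with s hs
    rw [hskew s t hs ht]
    exact my_integral_conv (ν s) (ν t) (T t) f.continuous hfb
  have h3 : Tendsto (fun s : ℝ => ∫ x, g x ∂(ν s)) atTop (𝓝 (∫ x, g x ∂νlim)) :=
    hconv g hgc ⟨‖f‖, hgb⟩
  have h4 : (∫ v, f v ∂νlim) = ∫ x, g x ∂νlim :=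
    tendsto_nhds_unique (h1.congr' h2) h3
  rw [h4, my_integral_conv νlim (ν t) (T t) f.continuous hfb]

end helpers


/-- For a stable semigroup `(T(t))` and a skew-convolution semigroup `(ν_t)`, a stationary
measure exists if and only if `ν_t` converges weakly as `t → ∞`; in this case the weak limit
equals the stationary measure. -/
theorem stmt6
    {V : Type*}
    [NormedAddCommGroup V] [InnerProductSpace ℝ V] [CompleteSpace V] [SecondCountableTopology V]
    [MeasurableSpace V] [BorelSpace V]
    (T : ℝ → V →L[ℝ] V)
    (hT0 : T 0 = ContinuousLinearMap.id ℝ V)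
    (hTadd : ∀ s t : ℝ, 0 ≤ s → 0 ≤ t → T (s + t) = (T s).comp (T t))
    (hstable : ∀ v : V, Tendsto (fun t : ℝ => T t v) atTop (𝓝 0))
    (ν : ℝ → Measure V) (hprob : ∀ t : ℝ, IsProbabilityMeasure (ν t))
    (hskew : ∀ s t : ℝ, 0 ≤ s → 0 ≤ t → ν (t + s) = ((ν s).map (T t)) ∗ (ν t)) :
    ((∃ ν0 : Measure V, IsProbabilityMeasure ν0 ∧
        ∀ t : ℝ, 0 ≤ t → ν0 = (ν0.map (T t)) ∗ (ν t))
      ↔ (∃ νlim : Measure V, IsProbabilityMeasure νlim ∧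
          ∀ f : V → ℝ, Continuous f → (∃ C : ℝ, ∀ x : V, |f x| ≤ C) →
            Tendsto (fun t : ℝ => ∫ v, f v ∂(ν t)) atTop (𝓝 (∫ v, f v ∂νlim))))
    ∧ (∀ ν0 νlim : Measure V, IsProbabilityMeasure ν0 → IsProbabilityMeasure νlim →
        (∀ t : ℝ, 0 ≤ t → ν0 = (ν0.map (T t)) ∗ (ν t)) →
        (∀ f : V → ℝ, Continuous f → (∃ C : ℝ, ∀ x : V, |f x| ≤ C) →
          Tendsto (fun t : ℝ => ∫ v, f v ∂(ν t)) atTop (𝓝 (∫ v, f v ∂νlim))) →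
        νlim = ν0) := by
  have hfwd : ∀ ν0 : Measure V, IsProbabilityMeasure ν0 →
      (∀ t : ℝ, 0 ≤ t → ν0 = (ν0.map (T t)) ∗ (ν t)) →
      ∀ f : V → ℝ, Continuous f → (∃ C : ℝ, ∀ x : V, |f x| ≤ C) →
        Tendsto (fun t : ℝ => ∫ v, f v ∂(ν t)) atTop (𝓝 (∫ v, f v ∂ν0)) := by
    intro ν0 hν0p hstat f hfc ⟨C, hC⟩
    haveI := hν0p
    have := my_forall_bcf_tendsto T hstable ν hprob ν0 hstat
      (BoundedContinuousFunction.ofNormedAddCommGroup f hfc C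
        (by simpa [Real.norm_eq_abs] using hC))
    simpa using this
  refine ⟨⟨?_, ?_⟩, ?_⟩
  · rintro ⟨ν0, hν0p, hstat⟩
    exact ⟨ν0, hν0p, hfwd ν0 hν0p hstat⟩
  · rintro ⟨νlim, hp, hconv⟩
    haveI := hp
    exact ⟨νlim, hp, my_limit_stationary T ν hprob hskew νlim hconv⟩
  · intro ν0 νlim h0p hlp hstat hconv
    haveI := h0p; haveI := hlp
    apply my_ext
    intro f
    exact tendsto_nhds_unique
      (hconv f f.continuous ⟨‖f‖, my_bcf_bound f⟩)
      (hfwd ν0 h0p hstat f f.continuous ⟨‖f‖, my_bcf_bound f⟩)
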